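/- The quadratic form f₁(x₁,x₂,x₃) = -9x₁² + 2x₁x₂ + 7x₂² + 2x₃² represents 1 over the 2-adic integers ℤ₂; that is, there exist a, b, c ∈ ℤ₂ with -9a² + 2ab + 7b² + 2c² = 1. -/

import Mathlib

theorem f1_represents_one_over_Z2 :
    ∃ a b c : ℤ_[2], -9 * a ^ 2 + 2 * a * b + 7 * b ^ 2 + 2 * c ^ 2 = 1 := by
  obtain ⟨c, hc, -⟩ := hensels_lemma (F := (Polynomial.X ^ 2 - 65 : Polynomial ℤ_[2])) (a := (1 : ℤ_[2])) (by
    simp only [Polynomial.coe_aeval_eq_eval, Polynomial.derivative_sub, Polynomial.derivative_X_pow, Polynomial.derivative_ofNat]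
    norm_num [Polynomial.eval_sub, Polynomial.eval_pow]
    have h1 : ((1:ℤ_[2]) - 65 : ℤ_[2]) = -64 := by ring
    have h2 : (64:ℤ_[2]) = 2 ^ 6 := by norm_num
    have h3 : ‖(2:ℤ_[2])‖ = (2:ℝ)⁻¹ := by
      rw [show ((2:ℤ_[2])) = ((2:ℕ):ℤ_[2]) by norm_num]
      exact_mod_cast PadicInt.norm_p
    rw [h2, norm_pow, h3]
    norm_num)
  refine ⟨4, 1, c, ?_⟩
  have : c ^ 2 = 65 := by
    have := hc
    simpa [Polynomial.coe_aeval_eq_eval, sub_eq_zero] using this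
  rw [this]; ring
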